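/- arXiv:2204.13475 — 8 statements merged into one kernel-verified Lean document; each statement's English description precedes it below -/
import Mathlib

section
/- Let u : ℤ → ℝ be a step image: there exist m ∈ ℤ and V₁, V₂ ∈ ℝ with u(j) = V₁ for all j ≤ m and u(j) = V₂ for all j > m. Then R(k) = 0 for every k ∈ ℤ, and consequently (Tu)(i) = u(i) for every i ∈ ℤ and every γ ∈ ℝ: the algorithm exactly preserves an isolated discontinuity and introduces no dissipation, whatever γ is. -/
/-- The one-step anisotropic scheme exactly preserves a step image (an isolated
discontinuity): all the quantities R vanish and the update leaves the image
unchanged, whatever the parameter γ is. -/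
theorem stmt_4 (h γ : ℝ) (hh : 0 < h)
    (u d s R Rint Tu : ℤ → ℝ)
    (hd : ∀ k : ℤ, d k = (u (k + 1) - u k) / h)
    (hs : ∀ k : ℤ, s k = (u (k - 1) - u k - u (k + 1) + u (k + 2)) / (2 * h ^ 2))
    (hR : ∀ k : ℤ, R k = Real.sqrt ((d k) ^ 2 / (1 + (d k) ^ 2)) * s k)
    (hRint : ∀ i : ℤ, Rint i = (-R (i - 2) + 9 * R (i - 1) + 9 * R i - R (i + 1)) / 16)
    (hT : ∀ i : ℤ, Tu i = u i + γ * Rint i)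
    (m : ℤ) (V₁ V₂ : ℝ)
    (hu₁ : ∀ j : ℤ, j ≤ m → u j = V₁)
    (hu₂ : ∀ j : ℤ, m < j → u j = V₂) :
    (∀ k : ℤ, R k = 0) ∧ (∀ i : ℤ, Tu i = u i) := by
  have hRz : ∀ k : ℤ, R k = 0 := by
    intro k
    rcases lt_trichotomy k m with hk | hk | hk
    · have hd0 : d k = 0 := by
        rw [hd, hu₁ (k + 1) (by omega), hu₁ k hk.le]; ring
      rw [hR, hd0]; simp
    · subst hk
      have hs0 : s k = 0 := by
        rw [hs, hu₁ (k - 1) (by omega), hu₁ k le_rfl, hu₂ (k + 1) (by omega),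
          hu₂ (k + 2) (by omega)]; ring
      rw [hR, hs0, mul_zero]
    · have hd0 : d k = 0 := by
        rw [hd, hu₂ (k + 1) (by omega), hu₂ k hk]; ring
      rw [hR, hd0]; simp
  refine ⟨hRz, fun i => ?_⟩
  rw [hT, hRint, hRz, hRz, hRz, hRz]; ring
end

section
/- Let m ∈ ℤ, V₁, V₂ ∈ ℝ with V₁ ≠ V₂, and let u : ℤ → ℝ be defined by u(j) = V₁ for j ≤ m − 1, u(m) = (V₁ + V₂)/2, and u(j) = V₂ for j ≥ m + 1. Set δ = V₂ − V₁, q = δ/(2h), and c = √(q²/(1 + q²)). Then one step of the algorithm gives exactly: (Tu)(m) = u(m); (Tu)(m−1) = V₁ + 5γcδ/(32h²); (Tu)(m+1) = V₂ − 5γcδ/(32h²); (Tu)(m−2) = V₁ − γcδ/(64h²); (Tu)(m+2) = V₂ + γcδ/(64h²); and (Tu)(j) = u(j) for all j with |j − m| ≥ 3. -/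
/-- Exact one-step transformation of a step image with an intermediate value at
the jump: the centre point is unchanged, the two neighbouring pairs of points
move by exactly 5γcδ/(32h²) and γcδ/(64h²) respectively, and all points at
distance at least 3 from the jump are unchanged. -/
theorem stmt_7 (h γ : ℝ) (hh : 0 < h)
    (u d s R Rint Tu : ℤ → ℝ)
    (hd : ∀ k : ℤ, d k = (u (k + 1) - u k) / h)
    (hs : ∀ k : ℤ, s k = (u (k - 1) - u k - u (k + 1) + u (k + 2)) / (2 * h ^ 2))
    (hR : ∀ k : ℤ, R k = Real.sqrt ((d k) ^ 2 / (1 + (d k) ^ 2)) * s k)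
    (hRint : ∀ i : ℤ, Rint i = (-R (i - 2) + 9 * R (i - 1) + 9 * R i - R (i + 1)) / 16)
    (hT : ∀ i : ℤ, Tu i = u i + γ * Rint i)
    (m : ℤ) (V₁ V₂ : ℝ) (hV : V₁ ≠ V₂)
    (hu₁ : ∀ j : ℤ, j ≤ m - 1 → u j = V₁)
    (hum : u m = (V₁ + V₂) / 2)
    (hu₂ : ∀ j : ℤ, m + 1 ≤ j → u j = V₂)
    (δ q c : ℝ)
    (hδ : δ = V₂ - V₁) (hq : q = δ / (2 * h))
    (hc : c = Real.sqrt (q ^ 2 / (1 + q ^ 2))) :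
    Tu m = u m ∧
    Tu (m - 1) = V₁ + 5 * γ * c * δ / (32 * h ^ 2) ∧
    Tu (m + 1) = V₂ - 5 * γ * c * δ / (32 * h ^ 2) ∧
    Tu (m - 2) = V₁ - γ * c * δ / (64 * h ^ 2) ∧
    Tu (m + 2) = V₂ + γ * c * δ / (64 * h ^ 2) ∧
    (∀ j : ℤ, 3 ≤ |j - m| → Tu j = u j) := by
  have hne : h ≠ 0 := ne_of_gt hh
  have hdval : ∀ k : ℤ, d k = if k = m - 1 ∨ k = m then q else 0 := by
    intro k
    rw [hd]
    by_cases h1 : k = m - 1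
    · rw [if_pos (Or.inl h1), h1, show m - 1 + 1 = m from by ring, hum,
        hu₁ (m - 1) le_rfl, hq, hδ]
      field_simp; ring
    by_cases h2 : k = m
    · rw [if_pos (Or.inr h2), h2, hu₂ (m + 1) le_rfl, hum, hq, hδ]
      field_simp; ring
    rw [if_neg (by tauto)]
    rcases lt_or_gt_of_ne h1 with hk | hk
    · rw [hu₁ (k + 1) (by omega), hu₁ k (by omega)]; ring
    · rw [hu₂ (k + 1) (by omega), hu₂ k (by omega)]; ring
  have hRval : ∀ k : ℤ,
      R k = if k = m - 1 then c * δ / (4 * h ^ 2)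
            else if k = m then -(c * δ / (4 * h ^ 2)) else 0 := by
    intro k
    rw [hR, hdval]
    by_cases h1 : k = m - 1
    · rw [if_pos (Or.inl h1), if_pos h1, ← hc, h1, hs,
        show m - 1 - 1 = m - 2 from by ring, show m - 1 + 1 = m from by ring,
        show m - 1 + 2 = m + 1 from by ring, hu₁ (m - 2) (by omega),
        hu₁ (m - 1) le_rfl, hum, hu₂ (m + 1) le_rfl, hδ]
      field_simp; ring
    by_cases h2 : k = m
    · rw [if_pos (Or.inr h2), if_neg h1, if_pos h2, ← hc, h2, hs,
        hu₁ (m - 1) le_rfl, hum, hu₂ (m + 1) le_rfl, hu₂ (m + 2) (by omega), hδ]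
      field_simp; ring
    · rw [if_neg (by tauto), if_neg h1, if_neg h2]
      norm_num
  have R1 : R (m - 1) = c * δ / (4 * h ^ 2) := by rw [hRval, if_pos rfl]
  have R2 : R m = -(c * δ / (4 * h ^ 2)) := by
    rw [hRval, if_neg (by omega), if_pos rfl]
  have R0 : ∀ k : ℤ, k ≠ m - 1 → k ≠ m → R k = 0 := by
    intro k h1 h2; rw [hRval, if_neg h1, if_neg h2]
  refine ⟨?_, ?_, ?_, ?_, ?_, ?_⟩
  · rw [hT, hRint, R0 (m - 2) (by omega) (by omega), show m - 1 = m - 1 from rfl,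
      R1, R2, R0 (m + 1) (by omega) (by omega)]
    ring
  · rw [hT, hRint, R0 (m - 1 - 2) (by omega) (by omega),
      R0 (m - 1 - 1) (by omega) (by omega), R1,
      show m - 1 + 1 = m from by ring, R2, hu₁ (m - 1) le_rfl]
    field_simp; ring
  · rw [hT, hRint, show m + 1 - 2 = m - 1 from by ring, R1,
      show m + 1 - 1 = m from by ring, R2,
      R0 (m + 1) (by omega) (by omega), R0 (m + 1 + 1) (by omega) (by omega),
      hu₂ (m + 1) le_rfl]
    field_simp; ring
  · rw [hT, hRint, R0 (m - 2 - 2) (by omega) (by omega),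
      R0 (m - 2 - 1) (by omega) (by omega), R0 (m - 2) (by omega) (by omega),
      show m - 2 + 1 = m - 1 from by ring, R1, hu₁ (m - 2) (by omega)]
    field_simp; ring
  · rw [hT, hRint, show m + 2 - 2 = m from by ring, R2,
      show m + 2 - 1 = m + 1 from by ring, R0 (m + 1) (by omega) (by omega),
      R0 (m + 2) (by omega) (by omega), R0 (m + 2 + 1) (by omega) (by omega),
      hu₂ (m + 2) (by omega)]
    field_simp; ring
  · intro j hj
    rcases le_abs.mp hj with hj' | hj' <;>
      · rw [hT, hRint, R0 (j - 2) (by omega) (by omega),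
          R0 (j - 1) (by omega) (by omega), R0 j (by omega) (by omega),
          R0 (j + 1) (by omega) (by omega)]
        ring
end

section
/- Let m ∈ ℤ, V₁ > V₂, and let u : ℤ → ℝ be defined by u(j) = V₁ for j ≤ m − 1, u(m) = (V₁ + V₂)/2, and u(j) = V₂ for j ≥ m + 1. If γ < 0, then after one step of the algorithm the jump is emphasized: (Tu)(m−1) > V₁ and (Tu)(m+1) < V₂. If instead γ > 0, the jump is smoothed: (Tu)(m−1) < V₁ and (Tu)(m+1) > V₂. -/
/-- For a descending step image with an intermediate value at the jump
(V₁ > V₂): with γ < 0 one step of the algorithm emphasizes the jump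
(Tu(m−1) > V₁ and Tu(m+1) < V₂), while with γ > 0 it smooths the jump
(Tu(m−1) < V₁ and Tu(m+1) > V₂). -/
theorem stmt_8 (h γ : ℝ) (hh : 0 < h)
    (u d s R Rint Tu : ℤ → ℝ)
    (hd : ∀ k : ℤ, d k = (u (k + 1) - u k) / h)
    (hs : ∀ k : ℤ, s k = (u (k - 1) - u k - u (k + 1) + u (k + 2)) / (2 * h ^ 2))
    (hR : ∀ k : ℤ, R k = Real.sqrt ((d k) ^ 2 / (1 + (d k) ^ 2)) * s k)
    (hRint : ∀ i : ℤ, Rint i = (-R (i - 2) + 9 * R (i - 1) + 9 * R i - R (i + 1)) / 16)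
    (hT : ∀ i : ℤ, Tu i = u i + γ * Rint i)
    (m : ℤ) (V₁ V₂ : ℝ) (hV : V₁ > V₂)
    (hu₁ : ∀ j : ℤ, j ≤ m - 1 → u j = V₁)
    (hum : u m = (V₁ + V₂) / 2)
    (hu₂ : ∀ j : ℤ, m + 1 ≤ j → u j = V₂) :
    (γ < 0 → Tu (m - 1) > V₁ ∧ Tu (m + 1) < V₂) ∧
    (γ > 0 → Tu (m - 1) < V₁ ∧ Tu (m + 1) > V₂) := by

  -- first differences at the jump
  have hD1 : d (m-1) = (V₂ - V₁)/(2*h) := by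
    rw [hd, show m-1+1 = m by ring, hum, hu₁ (m-1) le_rfl]
    field_simp; ring
  have hD2 : d m = (V₂ - V₁)/(2*h) := by
    rw [hd, hum, hu₂ (m+1) le_rfl]
    field_simp; ring
  -- zero differences away from the jump
  have hdz : ∀ k : ℤ, k ≤ m - 2 → d k = 0 := by
    intro k hk
    rw [hd, hu₁ k (by omega), hu₁ (k+1) (by omega)]; simp
  have hdz' : ∀ k : ℤ, m + 1 ≤ k → d k = 0 := by
    intro k hk
    rw [hd, hu₂ k hk, hu₂ (k+1) (by omega)]; simp
  have hR0 : ∀ k, d k = 0 → R k = 0 := by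
    intro k hk; rw [hR, hk]; simp
  -- second differences near the jump
  have hs1 : s (m-1) = (V₂ - V₁)/(4*h^2) := by
    rw [hs, show m-1-1 = m-2 by ring, show m-1+1 = m by ring,
        show m-1+2 = m+1 by ring, hu₁ (m-2) (by omega), hu₁ (m-1) le_rfl,
        hum, hu₂ (m+1) le_rfl]
    field_simp; ring
  have hs2 : s m = (V₁ - V₂)/(4*h^2) := by
    rw [hs, hu₁ (m-1) le_rfl, hum, hu₂ (m+1) le_rfl, hu₂ (m+2) (by omega)]
    field_simp; ring
  set a := Real.sqrt (((V₂ - V₁)/(2*h))^2 / (1 + ((V₂ - V₁)/(2*h))^2)) with ha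
  have hne : (V₂ - V₁)/(2*h) ≠ 0 := div_ne_zero (by linarith) (by positivity)
  have hapos : 0 < a := by
    apply Real.sqrt_pos.2
    apply div_pos
    · exact lt_of_le_of_ne (sq_nonneg _) (Ne.symm (pow_ne_zero 2 hne))
    · positivity
  have hR1 : R (m-1) = a * ((V₂ - V₁)/(4*h^2)) := by
    rw [hR, hD1, hs1]
  have hR2 : R m = a * ((V₁ - V₂)/(4*h^2)) := by
    rw [hR, hD2, hs2]
  set c := a * ((V₁ - V₂)/(4*h^2)) with hc
  have hcpos : 0 < c := mul_pos hapos (div_pos (by linarith) (by positivity))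
  have hR1' : R (m-1) = -c := by rw [hR1, hc]; ring
  have hRint1 : Rint (m-1) = -(5/8)*c := by
    rw [hRint, show m-1-2 = m-3 by ring, show m-1-1 = m-2 by ring,
        show m-1+1 = m by ring,
        hR0 (m-3) (hdz _ (by omega)), hR0 (m-2) (hdz _ (by omega)),
        hR1', hR2, hc]
    ring
  have hRint2 : Rint (m+1) = (5/8)*c := by
    rw [hRint, show m+1-2 = m-1 by ring, show m+1-1 = m by ring,
        show m+1+1 = m+2 by ring,
        hR0 (m+1) (hdz' _ le_rfl), hR0 (m+2) (hdz' _ (by omega)),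
        hR1', hR2, hc]
    ring
  have hT1 : Tu (m-1) = V₁ + γ * (-(5/8)*c) := by
    rw [hT, hu₁ (m-1) le_rfl, hRint1]
  have hT2 : Tu (m+1) = V₂ + γ * ((5/8)*c) := by
    rw [hT, hu₂ (m+1) le_rfl, hRint2]
  constructor
  · intro hγ
    constructor
    · rw [hT1]; nlinarith [mul_pos (neg_pos.2 hγ) hcpos]
    · rw [hT2]; nlinarith [mul_pos (neg_pos.2 hγ) hcpos]
  · intro hγ
    constructor
    · rw [hT1]; nlinarith [mul_pos hγ hcpos]
    · rw [hT2]; nlinarith [mul_pos hγ hcpos]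
end

section
/- Let m ∈ ℤ, V, W ∈ ℝ with W ≠ V, and let u : ℤ → ℝ be defined by u(m) = W and u(j) = V for all j ≠ m (an isolated single-pixel deviation). Set q = (W − V)/h and c = √(q²/(1 + q²)). Then one step of the algorithm gives (Tu)(m) = V + (W − V)·(1 − 9γc/(16h²)). In particular, if γ < 0 the deviation is amplified: |(Tu)(m) − V| > |W − V|. -/
/-- For an isolated single-pixel deviation (u(m) = W, u(j) = V for j ≠ m),
one step of the algorithm gives exactly
Tu(m) = V + (W − V)·(1 − 9γc/(16h²)), with c = √(q²/(1+q²)), q = (W − V)/h;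
in particular, for γ < 0 the deviation is amplified. -/
theorem stmt_9 (h γ : ℝ) (hh : 0 < h)
    (u d s R Rint Tu : ℤ → ℝ)
    (hd : ∀ k : ℤ, d k = (u (k + 1) - u k) / h)
    (hs : ∀ k : ℤ, s k = (u (k - 1) - u k - u (k + 1) + u (k + 2)) / (2 * h ^ 2))
    (hR : ∀ k : ℤ, R k = Real.sqrt ((d k) ^ 2 / (1 + (d k) ^ 2)) * s k)
    (hRint : ∀ i : ℤ, Rint i = (-R (i - 2) + 9 * R (i - 1) + 9 * R i - R (i + 1)) / 16)
    (hT : ∀ i : ℤ, Tu i = u i + γ * Rint i)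
    (m : ℤ) (V W : ℝ) (hVW : W ≠ V)
    (hum : u m = W) (huj : ∀ j : ℤ, j ≠ m → u j = V)
    (q c : ℝ) (hq : q = (W - V) / h) (hc : c = Real.sqrt (q ^ 2 / (1 + q ^ 2))) :
    Tu m = V + (W - V) * (1 - 9 * γ * c / (16 * h ^ 2)) ∧
    (γ < 0 → |Tu m - V| > |W - V|) := by
  have hh0 : h ≠ 0 := hh.ne'
  have hq0 : q ≠ 0 := by
    rw [hq]; exact div_ne_zero (sub_ne_zero.mpr hVW) hh0
  have hcpos : 0 < c := by
    rw [hc]; apply Real.sqrt_pos.mpr; positivity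
  have hRm2 : R (m - 2) = 0 := by
    rw [hR, hd]
    have e1 : m - 2 + 1 = m - 1 := by ring
    rw [e1, huj (m - 1) (by omega), huj (m - 2) (by omega)]
    simp
  have hRp1 : R (m + 1) = 0 := by
    rw [hR, hd]
    rw [huj (m + 1 + 1) (by omega), huj (m + 1) (by omega)]
    simp
  have hRm1 : R (m - 1) = c * ((V - W) / (2 * h ^ 2)) := by
    rw [hR, hd, hs, hc, hq]
    have e1 : m - 1 + 1 = m := by ring
    have e2 : m - 1 - 1 = m - 2 := by ring
    have e3 : m - 1 + 2 = m + 1 := by ring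
    rw [e1, e2, e3, hum, huj (m - 1) (by omega), huj (m - 2) (by omega),
      huj (m + 1) (by omega)]
    ring_nf
  have hRm : R m = c * ((V - W) / (2 * h ^ 2)) := by
    rw [hR, hd, hs, hc, hq]
    rw [hum, huj (m - 1) (by omega), huj (m + 1) (by omega), huj (m + 2) (by omega)]
    have e : ((V - W) / h) ^ 2 / (1 + ((V - W) / h) ^ 2)
        = ((W - V) / h) ^ 2 / (1 + ((W - V) / h) ^ 2) := by ring
    rw [e]
    ring_nf
  have hmain : Tu m = V + (W - V) * (1 - 9 * γ * c / (16 * h ^ 2)) := by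
    rw [hT, hRint, hRm2, hRp1, hRm1, hRm, hum]
    field_simp
    ring
  refine ⟨hmain, fun hγ => ?_⟩
  have hfac : 1 < 1 - 9 * γ * c / (16 * h ^ 2) := by
    have : 9 * γ * c / (16 * h ^ 2) < 0 := by
      apply div_neg_of_neg_of_pos
      · nlinarith
      · positivity
    linarith
  have hWV : 0 < |W - V| := abs_pos.mpr (sub_ne_zero.mpr hVW)
  rw [hmain]
  have : V + (W - V) * (1 - 9 * γ * c / (16 * h ^ 2)) - V
      = (W - V) * (1 - 9 * γ * c / (16 * h ^ 2)) := by ring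
  rw [this, abs_mul,
    abs_of_pos (show (0:ℝ) < 1 - 9 * γ * c / (16 * h ^ 2) by linarith)]
  nlinarith
end

section
/- Let V₁, V₂ ∈ ℝ and let u : ℤ×ℤ → ℝ be the checkerboard image u(i,j) = V₁ if i + j is even and u(i,j) = V₂ if i + j is odd. Then d^x(i,j) = 0 and d^y(i,j) = 0 for all (i,j) ∈ ℤ², hence R(i,j) = 0 for all (i,j), and consequently (Tu)(i,j) = u(i,j) for every (i,j) and every γ ∈ ℝ: the checkerboard image is invariant under the two-dimensional algorithm. -/
/-- The checkerboard image (value V₁ when i+j is even, V₂ when i+j is odd) is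
invariant under the two-dimensional algorithm: both staggered first differences
vanish everywhere, hence all quantities R vanish and the one-step update leaves
the image unchanged, whatever the parameter γ is. -/
theorem stmt_10 (h γ : ℝ) (hh : 0 < h)
    (u dx dy D l R Rint Tu : ℤ → ℤ → ℝ)
    (hdx : ∀ i j : ℤ, dx i j =
      (u (i + 2) (j + 1) + u (i + 2) (j + 2) - u (i + 1) (j + 1) - u (i + 1) (j + 2))
        / (2 * h))
    (hdy : ∀ i j : ℤ, dy i j =
      (u (i + 1) (j + 2) + u (i + 2) (j + 2) - u (i + 1) (j + 1) - u (i + 2) (j + 1))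
        / (2 * h))
    (hD : ∀ i j : ℤ, D i j = Real.sqrt ((dx i j) ^ 2 + (dy i j) ^ 2))
    (hl : ∀ i j : ℤ, l i j =
      (dx (i + 1) j - dx (i - 1) j + dy i (j + 1) - dy i (j - 1)) / (2 * h))
    (hR : ∀ i j : ℤ, R i j = Real.sqrt ((D i j) ^ 2 / (1 + (D i j) ^ 2)) * l i j)
    (hRint : ∀ i j : ℤ, Rint i j = (1 / 256) *
      (R (i - 2) (j - 2) - 9 * R (i - 2) (j - 1) - 9 * R (i - 2) j + R (i - 2) (j + 1)
        - 9 * R (i - 1) (j - 2) + 81 * R (i - 1) (j - 1) + 81 * R (i - 1) j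
        - 9 * R (i - 1) (j + 1)
        - 9 * R i (j - 2) + 81 * R i (j - 1) + 81 * R i j - 9 * R i (j + 1)
        + R (i + 1) (j - 2) - 9 * R (i + 1) (j - 1) - 9 * R (i + 1) j
        + R (i + 1) (j + 1)))
    (hT : ∀ i j : ℤ, Tu i j = u i j + γ * Rint i j)
    (V₁ V₂ : ℝ)
    (hu : ∀ i j : ℤ, u i j = if Even (i + j) then V₁ else V₂) :
    (∀ i j : ℤ, dx i j = 0) ∧ (∀ i j : ℤ, dy i j = 0) ∧
    (∀ i j : ℤ, R i j = 0) ∧ (∀ i j : ℤ, Tu i j = u i j) := by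
  have key : ∀ a b c d : ℤ, (Even a ↔ Even d) → (Even b ↔ Even c) →
      (if Even a then V₁ else V₂) + (if Even b then V₁ else V₂)
        - (if Even c then V₁ else V₂) - (if Even d then V₁ else V₂) = 0 := by
    intro a b c d h1 h2
    rw [if_congr h1 rfl rfl, if_congr h2 rfl rfl]; ring
  have hdx0 : ∀ i j : ℤ, dx i j = 0 := by
    intro i j
    rw [hdx, hu, hu, hu, hu,
      key _ _ _ _ (by simp [Int.even_iff]; omega) (by simp [Int.even_iff]; omega),
      zero_div]
  have hdy0 : ∀ i j : ℤ, dy i j = 0 := by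
    intro i j
    rw [hdy, hu, hu, hu, hu,
      key _ _ _ _ (by simp [Int.even_iff]; omega) (by simp [Int.even_iff]; omega),
      zero_div]
  have hl0 : ∀ i j : ℤ, l i j = 0 := by
    intro i j; rw [hl, hdx0, hdx0, hdy0, hdy0]; ring
  have hR0 : ∀ i j : ℤ, R i j = 0 := by
    intro i j; rw [hR, hl0, mul_zero]
  have hRint0 : ∀ i j : ℤ, Rint i j = 0 := by
    intro i j
    rw [hRint]
    simp only [hR0]
    ring
  refine ⟨hdx0, hdy0, hR0, fun i j => ?_⟩
  rw [hT, hRint0, mul_zero, add_zero]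
end

section
/- Let m ∈ ℤ, V₁, V₂ ∈ ℝ, and let u : ℤ×ℤ → ℝ be the axis-aligned step image u(i,j) = V₁ if i ≤ m and u(i,j) = V₂ if i > m. Then R(i,j) = 0 for all (i,j) ∈ ℤ², and consequently (Tu)(i,j) = u(i,j) for every (i,j) and every γ ∈ ℝ: a sharp straight edge aligned with the grid axes is exactly preserved by the two-dimensional algorithm, with no diffusion introduced despite the presence of the discrete Laplace operator. -/
/-- A sharp straight edge aligned with the grid axes (u(i,j) = V₁ for i ≤ m,
u(i,j) = V₂ for i > m) is exactly preserved by the two-dimensional algorithm: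
all quantities R vanish and the one-step update leaves the image unchanged,
whatever the parameter γ is. -/
theorem stmt_13 (h γ : ℝ) (hh : 0 < h)
    (u dx dy D l R Rint Tu : ℤ → ℤ → ℝ)
    (hdx : ∀ i j : ℤ, dx i j =
      (u (i + 2) (j + 1) + u (i + 2) (j + 2) - u (i + 1) (j + 1) - u (i + 1) (j + 2))
        / (2 * h))
    (hdy : ∀ i j : ℤ, dy i j =
      (u (i + 1) (j + 2) + u (i + 2) (j + 2) - u (i + 1) (j + 1) - u (i + 2) (j + 1))
        / (2 * h))
    (hD : ∀ i j : ℤ, D i j = Real.sqrt ((dx i j) ^ 2 + (dy i j) ^ 2))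
    (hl : ∀ i j : ℤ, l i j =
      (dx (i + 1) j - dx (i - 1) j + dy i (j + 1) - dy i (j - 1)) / (2 * h))
    (hR : ∀ i j : ℤ, R i j = Real.sqrt ((D i j) ^ 2 / (1 + (D i j) ^ 2)) * l i j)
    (hRint : ∀ i j : ℤ, Rint i j = (1 / 256) *
      (R (i - 2) (j - 2) - 9 * R (i - 2) (j - 1) - 9 * R (i - 2) j + R (i - 2) (j + 1)
        - 9 * R (i - 1) (j - 2) + 81 * R (i - 1) (j - 1) + 81 * R (i - 1) j
        - 9 * R (i - 1) (j + 1)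
        - 9 * R i (j - 2) + 81 * R i (j - 1) + 81 * R i j - 9 * R i (j + 1)
        + R (i + 1) (j - 2) - 9 * R (i + 1) (j - 1) - 9 * R (i + 1) j
        + R (i + 1) (j + 1)))
    (hT : ∀ i j : ℤ, Tu i j = u i j + γ * Rint i j)
    (m : ℤ) (V₁ V₂ : ℝ)
    (hu : ∀ i j : ℤ, u i j = if i ≤ m then V₁ else V₂) :
    (∀ i j : ℤ, R i j = 0) ∧ (∀ i j : ℤ, Tu i j = u i j) := by
  have hdy0 : ∀ i j : ℤ, dy i j = 0 := by
    intro i j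
    rw [hdy, hu, hu, hu, hu]
    ring
  have hdx0 : ∀ i j : ℤ, i ≠ m - 1 → dx i j = 0 := by
    intro i j hc
    rw [hdx, hu, hu, hu, hu]
    have : (i + 2 ≤ m) ↔ (i + 1 ≤ m) := by omega
    rw [if_congr this rfl rfl]
    ring
  have hR0 : ∀ i j : ℤ, R i j = 0 := by
    intro i j
    by_cases hc : i = m - 1
    · subst hc
      rw [hR, hl, hdx0 _ _ (by omega), hdx0 _ _ (by omega), hdy0, hdy0]
      simp
    · have hD0 : D i j = 0 := by
        rw [hD, hdx0 _ _ hc, hdy0]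
        simp
      rw [hR, hD0]
      simp
  refine ⟨hR0, fun i j => ?_⟩
  rw [hT, hRint]
  simp [hR0]
end

section
/- Let V₁, V₂ ∈ ℝ with V₁ ≠ V₂, set δ = V₂ − V₁, and let u : ℤ×ℤ → ℝ be the diagonal step image u(i,j) = V₁ if i < j and u(i,j) = V₂ if i ≥ j. Then for every i ∈ ℤ, the staggered quantities on the diagonal satisfy d^x(i,i) = δ/(2h), d^y(i,i) = −δ/(2h), l(i,i) = −δ/(2h²), and hence R(i,i) = −√(D²/(1 + D²)) · δ/(2h²) ≠ 0, where D² = δ²/(2h²). In particular, the diagonal step image is not an invariant of the two-dimensional algorithm: the quantities R do not all vanish. -/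
/-- For the diagonal step image (u(i,j) = V₁ if i < j, V₂ if i ≥ j, with
V₁ ≠ V₂ and δ = V₂ − V₁), the staggered quantities on the diagonal satisfy
d^x(i,i) = δ/(2h), d^y(i,i) = −δ/(2h), l(i,i) = −δ/(2h²), and
R(i,i) = −√(D²/(1+D²))·δ/(2h²) ≠ 0 with D² = δ²/(2h²); hence the diagonal
step image is not an invariant of the two-dimensional algorithm. -/
theorem stmt_14 (h : ℝ) (hh : 0 < h)
    (u dx dy D l R : ℤ → ℤ → ℝ)
    (hdx : ∀ i j : ℤ, dx i j =
      (u (i + 2) (j + 1) + u (i + 2) (j + 2) - u (i + 1) (j + 1) - u (i + 1) (j + 2))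
        / (2 * h))
    (hdy : ∀ i j : ℤ, dy i j =
      (u (i + 1) (j + 2) + u (i + 2) (j + 2) - u (i + 1) (j + 1) - u (i + 2) (j + 1))
        / (2 * h))
    (hD : ∀ i j : ℤ, D i j = Real.sqrt ((dx i j) ^ 2 + (dy i j) ^ 2))
    (hl : ∀ i j : ℤ, l i j =
      (dx (i + 1) j - dx (i - 1) j + dy i (j + 1) - dy i (j - 1)) / (2 * h))
    (hR : ∀ i j : ℤ, R i j = Real.sqrt ((D i j) ^ 2 / (1 + (D i j) ^ 2)) * l i j)
    (V₁ V₂ : ℝ) (hV : V₁ ≠ V₂) (δ : ℝ) (hδ : δ = V₂ - V₁)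
    (hu : ∀ i j : ℤ, u i j = if i < j then V₁ else V₂) :
    ∀ i : ℤ,
      dx i i = δ / (2 * h) ∧
      dy i i = -(δ / (2 * h)) ∧
      l i i = -(δ / (2 * h ^ 2)) ∧
      R i i = -(Real.sqrt ((δ ^ 2 / (2 * h ^ 2)) / (1 + δ ^ 2 / (2 * h ^ 2)))
        * δ / (2 * h ^ 2)) ∧
      R i i ≠ 0 := by
  intro i
  have hδ0 : δ ≠ 0 := by rw [hδ]; exact sub_ne_zero.mpr (Ne.symm hV)
  have hdxii : dx i i = δ / (2 * h) := by
    rw [hdx]; simp only [hu]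
    split_ifs <;> first | (exfalso; omega) | (rw [hδ]; ring)
  have hdyii : dy i i = -(δ / (2 * h)) := by
    rw [hdy]; simp only [hu]
    split_ifs <;> first | (exfalso; omega) | (rw [hδ]; ring)
  have hA : dx (i + 1) i = 0 := by
    rw [hdx]; simp only [hu]
    split_ifs <;> first | (exfalso; omega) | ring
  have hB : dx (i - 1) i = δ / (2 * h) := by
    rw [hdx]; simp only [hu]
    split_ifs <;> first | (exfalso; omega) | (rw [hδ]; ring)
  have hC : dy i (i + 1) = -(δ / (2 * h)) := by
    rw [hdy]; simp only [hu]
    split_ifs <;> first | (exfalso; omega) | (rw [hδ]; ring)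
  have hE : dy i (i - 1) = 0 := by
    rw [hdy]; simp only [hu]
    split_ifs <;> first | (exfalso; omega) | ring
  have hlii : l i i = -(δ / (2 * h ^ 2)) := by
    rw [hl, hA, hB, hC, hE]
    field_simp
    ring
  have hD2 : (D i i) ^ 2 = δ ^ 2 / (2 * h ^ 2) := by
    rw [hD, Real.sq_sqrt (by positivity), hdxii, hdyii]
    field_simp; ring
  have hRii : R i i = -(Real.sqrt ((δ ^ 2 / (2 * h ^ 2)) / (1 + δ ^ 2 / (2 * h ^ 2)))
      * δ / (2 * h ^ 2)) := by
    rw [hR, hD2, hlii]; ring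
  refine ⟨hdxii, hdyii, hlii, hRii, ?_⟩
  rw [hRii]
  have hs : 0 < Real.sqrt ((δ ^ 2 / (2 * h ^ 2)) / (1 + δ ^ 2 / (2 * h ^ 2))) :=
    Real.sqrt_pos.mpr (by positivity)
  intro hc
  have := neg_eq_zero.mp hc
  have h2 : (2 : ℝ) * h ^ 2 ≠ 0 := by positivity
  have := (div_eq_zero_iff.mp this).resolve_right h2
  rcases mul_eq_zero.mp this with h' | h'
  · exact absurd h' (ne_of_gt hs)
  · exact hδ0 h'
end

section
/- Let a > 0, h > 0, Δt ≠ 0, let m ∈ ℤ, V₁, V₂ ∈ ℝ with V₁ ≠ V₂, set δ = V₂ − V₁, and let u : ℤ×ℤ → ℝ be the axis-aligned step image u(i,j) = V₁ if i ≤ m and u(i,j) = V₂ if i > m. Then for every j ∈ ℤ the Perona–Malik update changes the value at (m, j): u_new(m,j) − u(m,j) = (Δt/h²) · g_a(|δ|/(2h)) · δ ≠ 0. Hence, in contrast with the paper's scheme, the Perona–Malik discretization does not preserve a sharp straight edge aligned with the grid axes. -/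
/-- The explicit Perona–Malik finite-difference scheme does not preserve a
sharp straight edge aligned with the grid axes: for the step image
u(i,j) = V₁ if i ≤ m, V₂ if i > m (with V₁ ≠ V₂, δ = V₂ − V₁), the update at
(m, j) changes the value by exactly (Δt/h²)·g_a(|δ|/(2h))·δ ≠ 0, for every j. -/
theorem stmt_15 (a h Δt : ℝ) (ha : 0 < a) (hh : 0 < h) (hΔt : Δt ≠ 0)
    (g : ℝ → ℝ) (hg : ∀ η : ℝ, g η = (1 + η ^ 2 / a ^ 2)⁻¹)
    (u G unew : ℤ → ℤ → ℝ)
    (hG : ∀ i j : ℤ, G i j =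
      g (Real.sqrt (((u (i + 1) j - u (i - 1) j) / (2 * h)) ^ 2
        + ((u i (j + 1) - u i (j - 1)) / (2 * h)) ^ 2)))
    (hnew : ∀ i j : ℤ, unew i j = u i j + (Δt / h ^ 2) *
      ((G i j + G (i + 1) j) / 2 * (u (i + 1) j - u i j)
        - (G (i - 1) j + G i j) / 2 * (u i j - u (i - 1) j)
        + (G i j + G i (j + 1)) / 2 * (u i (j + 1) - u i j)
        - (G i (j - 1) + G i j) / 2 * (u i j - u i (j - 1))))
    (m : ℤ) (V₁ V₂ : ℝ) (hV : V₁ ≠ V₂) (δ : ℝ) (hδ : δ = V₂ - V₁)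
    (hu : ∀ i j : ℤ, u i j = if i ≤ m then V₁ else V₂) :
    ∀ j : ℤ,
      unew m j - u m j = (Δt / h ^ 2) * g (|δ| / (2 * h)) * δ ∧
      unew m j - u m j ≠ 0 := by
  intro j
  have hum : ∀ j : ℤ, u m j = V₁ := fun j => by simp [hu]
  have hum1 : ∀ j : ℤ, u (m + 1) j = V₂ := fun j => by simp [hu]
  have humm1 : ∀ j : ℤ, u (m - 1) j = V₁ := fun j => by
    rw [hu]; simp [show m - 1 ≤ m by omega]
  have humm2 : ∀ j : ℤ, u (m - 2) j = V₁ := fun j => by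
    rw [hu]; simp [show m - 2 ≤ m by omega]
  have hum2 : ∀ j : ℤ, u (m + 2) j = V₂ := fun j => by
    rw [hu]; simp [show ¬ (m + 2 ≤ m) by omega]
  have hsq : ∀ V : ℝ, Real.sqrt ((δ / (2 * h)) ^ 2 + ((V - V) / (2 * h)) ^ 2)
      = |δ| / (2 * h) := fun V => by
    rw [sub_self, zero_div]
    simp [Real.sqrt_sq_eq_abs, abs_div, abs_of_pos (by positivity : (0:ℝ) < 2 * h)]
  have hGm : G m j = g (|δ| / (2 * h)) := by
    rw [hG, hum1, humm1, hum, hum, ← hδ, hsq]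
  have hGm1 : G (m + 1) j = g (|δ| / (2 * h)) := by
    have : (m + 1 : ℤ) + 1 = m + 2 := by ring
    rw [hG, this, hum2, show (m + 1 : ℤ) - 1 = m by ring, hum, ← hδ, hum1, hum1, hsq]
  rw [hnew]
  rw [hum1, hum, humm1, hum, hum, hGm, hGm1, ← hδ]
  have heq : V₁ + Δt / h ^ 2 *
      ((g (|δ| / (2 * h)) + g (|δ| / (2 * h))) / 2 * δ
        - (G (m - 1) j + g (|δ| / (2 * h))) / 2 * (V₁ - V₁)
        + (g (|δ| / (2 * h)) + G m (j + 1)) / 2 * (V₁ - V₁)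
        - (G m (j - 1) + g (|δ| / (2 * h))) / 2 * (V₁ - V₁)) - V₁
      = Δt / h ^ 2 * g (|δ| / (2 * h)) * δ := by ring
  refine ⟨heq, ?_⟩
  rw [heq]
  have hδ0 : δ ≠ 0 := by rw [hδ]; exact sub_ne_zero.mpr hV.symm
  have hg0 : g (|δ| / (2 * h)) ≠ 0 := by
    rw [hg]; positivity
  have : Δt / h ^ 2 ≠ 0 := by positivity
  exact mul_ne_zero (mul_ne_zero this hg0) hδ0
end
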